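/- Let θ₀ ∈ (0,1), let X be a random variable with the Bernoulli(θ₀) distribution, and let θ' be a real number. Then E[(X − θ')²] − E[(X − 0)²] = (θ' − θ₀)² − θ₀². Consequently, if (θ' − θ₀)² < θ₀², then E[(X − θ')²] < E[(X − 0)²], i.e. the centroid θ' has strictly smaller expected L₂ loss than the centroid 0. -/

import Mathlib

open MeasureTheory

lemma bern_sq_integral {Ω : Type*} [MeasurableSpace Ω] (P : Measure Ω)
    [IsProbabilityMeasure P] (θ₀ : ℝ) (h0 : 0 ≤ θ₀) (h1 : θ₀ ≤ 1)
    (X : Ω → ℝ) (hX : Measurable X) (hval : ∀ ω, X ω = 0 ∨ X ω = 1)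
    (hdist : P {ω | X ω = 1} = ENNReal.ofReal θ₀) (c : ℝ) :
    (∫ ω, (X ω - c) ^ 2 ∂P) = θ₀ * (1 - c) ^ 2 + (1 - θ₀) * c ^ 2 := by
  set s : Set Ω := {ω | X ω = 1} with hs
  have hms : MeasurableSet s := hX (measurableSet_singleton 1)
  have hfun : (fun ω => (X ω - c) ^ 2)
      = fun ω => s.indicator (fun _ => (1 - c) ^ 2 - c ^ 2) ω + c ^ 2 := by
    funext ω
    rcases hval ω with h | h
    · have hns : ω ∉ s := by simp [hs, h]
      simp [h, Set.indicator_of_notMem hns]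
    · have hins : ω ∈ s := by simp [hs, h]
      simp [h, Set.indicator_of_mem hins]
  rw [hfun]
  rw [integral_add]
  · rw [integral_indicator_const _ hms, integral_const, measureReal_def, hdist]
    simp [ENNReal.toReal_ofReal h0, measure_univ]
    ring
  · exact (integrable_const _).indicator hms
  · exact integrable_const _

/-- For `θ₀ ∈ (0,1)`, `X ~ Bernoulli(θ₀)` and any real `θ'`,
`E[(X − θ')²] − E[(X − 0)²] = (θ' − θ₀)² − θ₀²`; hence if `(θ' − θ₀)² < θ₀²`
then the centroid `θ'` has strictly smaller expected `L₂` loss than the centroid `0`. -/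
theorem bernoulli_l2_loss_vs_zero_centroid
    {Ω : Type*} [MeasurableSpace Ω] (P : Measure Ω) [IsProbabilityMeasure P]
    (θ₀ : ℝ) (hθ₀ : θ₀ ∈ Set.Ioo (0 : ℝ) 1)
    (X : Ω → ℝ) (hX : Measurable X) (hval : ∀ ω, X ω = 0 ∨ X ω = 1)
    (hdist : P {ω | X ω = 1} = ENNReal.ofReal θ₀)
    (θ' : ℝ) :
    (∫ ω, (X ω - θ') ^ 2 ∂P) - (∫ ω, (X ω - 0) ^ 2 ∂P) = (θ' - θ₀) ^ 2 - θ₀ ^ 2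
    ∧ ((θ' - θ₀) ^ 2 < θ₀ ^ 2 → (∫ ω, (X ω - θ') ^ 2 ∂P) < ∫ ω, (X ω - 0) ^ 2 ∂P) := by
  obtain ⟨h0, h1⟩ := hθ₀
  have hA := bern_sq_integral P θ₀ h0.le h1.le X hX hval hdist θ'
  have hB := bern_sq_integral P θ₀ h0.le h1.le X hX hval hdist 0
  constructor
  · rw [hA, hB]; ring
  · intro h; rw [hA, hB]; nlinarith
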